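/- Two positive paths in the arrangement graph G(A) that are equivalent in the category of positive paths G⁺(A) cross every hyperplane of A the same number of times. -/

import Mathlib

open scoped Classical
noncomputable section

/-- Ambient real vector space `ℝ^d`. -/
abbrev EucV (d : ℕ) := Fin d → ℝ

/-- The complement of the arrangement given by the kernels of the linear forms in `A`. -/
def hypCompl {d : ℕ} (A : Finset (EucV d →ₗ[ℝ] ℝ)) : Set (EucV d) :=
  {x | ∀ f ∈ A, f x ≠ 0}

/-- A chamber of the arrangement: a connected component of the complement. -/
def IsChamber {d : ℕ} (A : Finset (EucV d →ₗ[ℝ] ℝ)) (C : Set (EucV d)) : Prop :=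
  ∃ x ∈ hypCompl A, C = connectedComponentIn (hypCompl A) x

/-- The hyperplane `ker f` separates `C` from `C'`. -/
def SepBy {d : ℕ} (f : EucV d →ₗ[ℝ] ℝ) (C C' : Set (EucV d)) : Prop :=
  ∃ x ∈ C, ∃ y ∈ C', f x * f y < 0

/-- The set `S(C,C')` of hyperplanes of `A` separating `C` from `C'`. -/
def sepSet {d : ℕ} (A : Finset (EucV d →ₗ[ℝ] ℝ)) (C C' : Set (EucV d)) :
    Set (EucV d →ₗ[ℝ] ℝ) :=
  {f | f ∈ A ∧ SepBy f C C'}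

/-- A positive path in the arrangement graph: a nonempty list of chambers in which
consecutive chambers are adjacent (separated by exactly one hyperplane). -/
def IsPosPath {d : ℕ} (A : Finset (EucV d →ₗ[ℝ] ℝ)) (l : List (Set (EucV d))) : Prop :=
  l ≠ [] ∧ (∀ C ∈ l, IsChamber A C) ∧ l.Chain' (fun C C' => (sepSet A C C').ncard = 1)

/-- A positive minimal path: its number of edges equals the number of hyperplanes
separating its endpoints. -/
def IsMinPath {d : ℕ} (A : Finset (EucV d →ₗ[ℝ] ℝ)) (l : List (Set (EucV d))) : Prop :=
  IsPosPath A l ∧ l.length = (sepSet A l.headI (l.getLast!)).ncard + 1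

/-- Equivalence of positive paths in the category `𝒢⁺(A)`: the congruence generated by
substituting a positive minimal subpath by another with the same endpoints. -/
inductive PathEquiv {d : ℕ} (A : Finset (EucV d →ₗ[ℝ] ℝ)) :
    List (Set (EucV d)) → List (Set (EucV d)) → Prop
  | subst (l₁ m m' l₂ : List (Set (EucV d))) :
      IsMinPath A m → IsMinPath A m' → m.headI = m'.headI → m.getLast! = m'.getLast! →
      IsPosPath A (l₁ ++ m ++ l₂) → PathEquiv A (l₁ ++ m ++ l₂) (l₁ ++ m' ++ l₂)
  | refl (l : List (Set (EucV d))) : PathEquiv A l l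
  | symm {l l' : List (Set (EucV d))} : PathEquiv A l l' → PathEquiv A l' l
  | trans {l l' l'' : List (Set (EucV d))} :
      PathEquiv A l l' → PathEquiv A l' l'' → PathEquiv A l l''

/-- The number of times a path crosses the hyperplane `ker f`. -/
def crossings {d : ℕ} (f : EucV d →ₗ[ℝ] ℝ) (l : List (Set (EucV d))) : ℕ :=
  ((l.zip l.tail).filter (fun p => decide (SepBy f p.1 p.2))).length


section Aux

variable {d : ℕ} {A : Finset (EucV d →ₗ[ℝ] ℝ)}

/-- A chamber is nonempty. -/
lemma chamber_nonempty {C : Set (EucV d)} (hC : IsChamber A C) : C.Nonempty := by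
  obtain ⟨x, hx, rfl⟩ := hC
  exact ⟨x, mem_connectedComponentIn hx⟩

/-- A hyperplane of the arrangement has constant sign on each chamber. -/
lemma chamber_sign {C : Set (EucV d)} (hC : IsChamber A C)
    {f : EucV d →ₗ[ℝ] ℝ} (hf : f ∈ A) :
    (∀ x ∈ C, 0 < f x) ∨ (∀ x ∈ C, f x < 0) := by
  obtain ⟨x₀, hx₀, rfl⟩ := hC
  have hsub : connectedComponentIn (hypCompl A) x₀ ⊆ hypCompl A :=
    connectedComponentIn_subset _ _
  have hpre : IsPreconnected (connectedComponentIn (hypCompl A) x₀) :=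
    isPreconnected_connectedComponentIn
  have hcont : ContinuousOn f (connectedComponentIn (hypCompl A) x₀) :=
    (f.continuous_of_finiteDimensional).continuousOn
  by_contra hcon
  push_neg at hcon
  obtain ⟨⟨x, hx, hx'⟩, ⟨y, hy, hy'⟩⟩ := hcon
  have h0 : (0:ℝ) ∈ Set.Icc (f x) (f y) := ⟨hx', hy'⟩
  obtain ⟨z, hz, hz0⟩ := hpre.intermediate_value hx hy hcont h0
  exact hsub hz f hf hz0

/-- Separation by a hyperplane is determined by signs on the chambers. -/
lemma sepBy_iff {C C' : Set (EucV d)} (hC : IsChamber A C) (hC' : IsChamber A C')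
    {f : EucV d →ₗ[ℝ] ℝ} (hf : f ∈ A) :
    SepBy f C C' ↔ ¬((∀ x ∈ C, 0 < f x) ↔ (∀ x ∈ C', 0 < f x)) := by
  obtain ⟨x, hx⟩ := chamber_nonempty hC
  obtain ⟨y, hy⟩ := chamber_nonempty hC'
  rcases chamber_sign hC hf with h1 | h1 <;> rcases chamber_sign hC' hf with h2 | h2
  · constructor
    · rintro ⟨a, ha, b, hb, hab⟩
      exact absurd hab (by nlinarith [h1 a ha, h2 b hb])
    · intro h; exact absurd (iff_of_true h1 h2) h
  · constructor
    · intro _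
      intro hiff
      exact absurd (hiff.mp h1 y hy) (by nlinarith [h2 y hy])
    · intro _
      exact ⟨x, hx, y, hy, by nlinarith [h1 x hx, h2 y hy]⟩
  · constructor
    · intro _
      intro hiff
      exact absurd (hiff.mpr h2 x hx) (by nlinarith [h1 x hx])
    · intro _
      exact ⟨x, hx, y, hy, by nlinarith [h1 x hx, h2 y hy]⟩
  · constructor
    · rintro ⟨a, ha, b, hb, hab⟩
      exact absurd hab (by nlinarith [h1 a ha, h2 b hb])
    · intro h
      refine absurd ?_ h
      constructor
      · intro hp; exact absurd (hp x hx) (by nlinarith [h1 x hx])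
      · intro hp; exact absurd (hp y hy) (by nlinarith [h2 y hy])

lemma getLast!_singleton (a : Set (EucV d)) : ([a] : List (Set (EucV d))).getLast! = a := by
  simp [List.getLast!]

lemma getLast!_mem : ∀ (l : List (Set (EucV d))), l ≠ [] → l.getLast! ∈ l
  | [], h => absurd rfl h
  | [a], _ => by simp [List.getLast!]
  | a :: b :: t, _ => by
      have := getLast!_mem (b :: t) (by simp)
      simp only [List.getLast!] at this ⊢
      exact List.mem_cons_of_mem _ this

lemma getLast!_cons_cons (a b : Set (EucV d)) (t : List (Set (EucV d))) :
    (a :: b :: t).getLast! = (b :: t).getLast! := by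
  simp [List.getLast!]

lemma crossings_cons_cons (f : EucV d →ₗ[ℝ] ℝ) (a b : Set (EucV d))
    (t : List (Set (EucV d))) :
    crossings f (a :: b :: t) =
      (if SepBy f a b then 1 else 0) + crossings f (b :: t) := by
  simp only [crossings, List.zip, List.tail, List.zipWith, List.filter]
  by_cases h : SepBy f a b <;> simp [h, Nat.add_comm]

lemma crossings_singleton (f : EucV d →ₗ[ℝ] ℝ) (a : Set (EucV d)) :
    crossings f [a] = 0 := by simp [crossings]

lemma crossings_nil (f : EucV d →ₗ[ℝ] ℝ) : crossings f ([] : List (Set (EucV d))) = 0 := by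
  simp [crossings]

/-- If the endpoints of a path of chambers are separated by `f`, the path crosses `f`. -/
lemma one_le_crossings {f : EucV d →ₗ[ℝ] ℝ} (hf : f ∈ A) :
    ∀ (l : List (Set (EucV d))), l ≠ [] → (∀ C ∈ l, IsChamber A C) →
      SepBy f l.headI l.getLast! → 1 ≤ crossings f l
  | [], h, _, _ => absurd rfl h
  | [a], _, hch, hsep => by
      simp only [List.headI, List.getLast!] at hsep
      have := (sepBy_iff (hch a (by simp)) (hch a (by simp)) hf).mp hsep
      simp at this
  | a :: b :: t, _, hch, hsep => by
      rw [crossings_cons_cons]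
      by_cases hab : SepBy f a b
      · simp [hab]
      · rw [getLast!_cons_cons] at hsep
        simp only [List.headI] at hsep
        have hL : (b :: t).getLast! ∈ a :: b :: t :=
          List.mem_cons_of_mem _ (getLast!_mem (b :: t) (by simp))
        have hcha := hch a (by simp)
        have hchb := hch b (by simp)
        have hchL := hch _ hL
        rw [sepBy_iff hcha hchL hf] at hsep
        rw [sepBy_iff hcha hchb hf] at hab
        push_neg at hab
        have hsep' : SepBy f b ((b :: t).getLast!) := by
          rw [sepBy_iff hchb hchL hf]
          intro hiff
          exact hsep (hab.trans hiff)
        have := one_le_crossings hf (b :: t) (by simp)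
          (fun C hCm => hch C (by simp [hCm])) hsep'
        exact le_trans this (Nat.le_add_left _ _)

lemma sepSet_ncard (C C' : Set (EucV d)) :
    (sepSet A C C').ncard = (A.filter (fun f => SepBy f C C')).card := by
  have : sepSet A C C' = ↑(A.filter (fun f => SepBy f C C')) := by
    ext g; simp [sepSet, Finset.mem_filter]
  rw [this, Set.ncard_coe_finset]

/-- The total number of crossings of a positive path equals its number of edges. -/
lemma sum_crossings :
    ∀ (l : List (Set (EucV d))), IsPosPath A l →
      ∑ f ∈ A, crossings f l = l.length - 1
  | [], h => absurd rfl h.1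
  | [a], _ => by simp [crossings_singleton]
  | a :: b :: t, h => by
      obtain ⟨-, hch, hchain⟩ := h
      rw [List.Chain', List.isChain_cons_cons] at hchain
      have hsum : ∑ f ∈ A, (if SepBy f a b then 1 else 0) = 1 := by
        rw [← Finset.card_filter, ← sepSet_ncard]
        exact hchain.1
      have ih := sum_crossings (b :: t)
        ⟨by simp, fun C hCm => hch C (by simp [hCm]), hchain.2⟩
      simp only [crossings_cons_cons, Finset.sum_add_distrib, hsum, ih]
      simp only [List.length]
      omega

/-- A minimal path crosses each hyperplane exactly once if it separates the
endpoints, and zero times otherwise. -/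
lemma minPath_crossings {m : List (Set (EucV d))} (hm : IsMinPath A m)
    {f : EucV d →ₗ[ℝ] ℝ} (hf : f ∈ A) :
    crossings f m = if SepBy f m.headI m.getLast! then 1 else 0 := by
  obtain ⟨hpos, hlen⟩ := hm
  have hle : ∀ g ∈ A, (if SepBy g m.headI m.getLast! then 1 else 0) ≤ crossings g m := by
    intro g hg
    by_cases hs : SepBy g m.headI m.getLast!
    · rw [if_pos hs]; exact one_le_crossings hg m hpos.1 hpos.2.1 hs
    · rw [if_neg hs]; exact Nat.zero_le _
  have hsum : ∑ g ∈ A, (if SepBy g m.headI m.getLast! then 1 else 0)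
      = ∑ g ∈ A, crossings g m := by
    rw [← Finset.card_filter, ← sepSet_ncard, sum_crossings m hpos]
    omega
  exact ((Finset.sum_eq_sum_iff_of_le hle).mp hsum f hf).symm

lemma headI_append {m : List (Set (EucV d))} (hm : m ≠ []) (l : List (Set (EucV d))) :
    (m ++ l).headI = m.headI := by
  cases m with
  | nil => exact absurd rfl hm
  | cons a t => rfl

lemma crossings_append (f : EucV d →ₗ[ℝ] ℝ) :
    ∀ (a b : List (Set (EucV d))), b ≠ [] →
      crossings f (a ++ b) = crossings f (a ++ [b.headI]) + crossings f b
  | [], b, hb => by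
      cases b with
      | nil => exact absurd rfl hb
      | cons x t =>
          simp only [List.nil_append, List.headI]
          cases t with
          | nil => simp [crossings_singleton]
          | cons y s =>
              rw [crossings_cons_cons, crossings_singleton]
              omega
  | [x], b, hb => by
      cases b with
      | nil => exact absurd rfl hb
      | cons y t =>
          simp only [List.singleton_append, List.headI]
          rw [crossings_cons_cons, crossings_cons_cons, crossings_singleton]
          omega
  | x :: y :: s, b, hb => by
      have ih := crossings_append f (y :: s) b hb
      simp only [List.cons_append] at ih ⊢
      rw [crossings_cons_cons, crossings_cons_cons, ih]
      omega

lemma crossings_append' (f : EucV d →ₗ[ℝ] ℝ) :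
    ∀ (a b : List (Set (EucV d))), a ≠ [] →
      crossings f (a ++ b) = crossings f a + crossings f (a.getLast! :: b)
  | [], _, ha => absurd rfl ha
  | [x], b, _ => by
      simp only [List.singleton_append, crossings_singleton]
      have : ([x] : List (Set (EucV d))).getLast! = x := by
        simp [List.getLast!]
      rw [this]; omega
  | x :: y :: s, b, _ => by
      have ih := crossings_append' f (y :: s) b (by simp)
      simp only [List.cons_append] at ih ⊢
      rw [crossings_cons_cons, crossings_cons_cons, ih, getLast!_cons_cons]
      omega

/-- Crossing count of a three-part concatenation with nonempty middle. -/
lemma crossings_three (f : EucV d →ₗ[ℝ] ℝ) (l₁ m l₂ : List (Set (EucV d)))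
    (hm : m ≠ []) :
    crossings f (l₁ ++ m ++ l₂) =
      crossings f (l₁ ++ [m.headI]) + crossings f m
        + crossings f (m.getLast! :: l₂) := by
  rw [List.append_assoc, crossings_append f l₁ (m ++ l₂) (by simp [hm]),
    headI_append hm, crossings_append' f m l₂ hm]
  omega

end Aux

/-- Two positive paths that are equivalent in the category of positive paths `𝒢⁺(A)`
cross every hyperplane of `A` the same number of times. -/
theorem equiv_paths_same_crossings {d : ℕ} (A : Finset (EucV d →ₗ[ℝ] ℝ))
    (hA : ∀ f ∈ A, f ≠ 0) (l l' : List (Set (EucV d)))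
    (hl : IsPosPath A l) (hl' : IsPosPath A l')
    (h : PathEquiv A l l') :
    ∀ f ∈ A, crossings f l = crossings f l' := by
  clear hl hl'
  induction h with
  | subst l₁ m m' l₂ hm hm' hh hgl hp =>
      intro f hf
      have hmne : m ≠ [] := hm.1.1
      have hm'ne : m' ≠ [] := hm'.1.1
      rw [crossings_three f l₁ m l₂ hmne, crossings_three f l₁ m' l₂ hm'ne,
        ← hh, ← hgl, minPath_crossings hm hf, minPath_crossings hm' hf, hh, hgl]
  | refl l => intro f hf; rfl
  | symm h ih =>
      intro f hf
      exact (ih f hf).symm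
  | trans h₁ h₂ ih₁ ih₂ =>
      intro f hf
      exact (ih₁ f hf).trans (ih₂ f hf)
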